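/- arXiv:2103.11632 — 2 statements merged into one kernel-verified Lean document; each statement's English description precedes it below -/
import Mathlib

section
/- For any unit vector u in R^k and any 0 < Δ ≤ π/2, the surface area of the set N(u, Δ) = { v ∈ S^{k-1} : |u·v| > cos Δ } is at most (2 Δ^{k-1}/(k-1)) · area(S^{k-2}). -/
open MeasureTheory Real
open scoped ENNReal Pointwise
open Set intervalIntegral

/-- Surface area of the unit sphere `S^m ⊆ ℝ^(m+1)`: `2 π^((m+1)/2) / Γ((m+1)/2)`. -/
noncomputable def sphereArea (m : ℝ) : ℝ :=
  2 * Real.pi ^ ((m + 1) / 2) / Real.Gamma ((m + 1) / 2)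

lemma key_ineq (n : ℕ) {Δ : ℝ} (hΔ : 0 ≤ Δ) (hΔ' : Δ ≤ π/2) :
    Real.sin Δ ^ (n+1) * Real.cos Δ / (n+2) + (∫ t in Real.cos Δ..1, Real.sqrt (1-t^2) ^ (n+1))
      ≤ Δ^(n+1)/(n+2) := by
  set h : ℝ → ℝ := fun t => Real.sqrt (1-t^2)^(n+1) with hh
  have hcont : Continuous h := by fun_prop
  set F : ℝ → ℝ := fun θ => θ^(n+1)/(n+2) - Real.sin θ^(n+1) * Real.cos θ/(n+2)
      - ∫ t in Real.cos θ..1, h t with hF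
  have hderiv : ∀ θ : ℝ, HasDerivAt F
      ((↑(n+1) * θ^n)/(n+2)
        - ((↑(n+1) * Real.sin θ^n * Real.cos θ) * Real.cos θ + Real.sin θ^(n+1) * (-Real.sin θ))/(n+2)
        - (-h (Real.cos θ) * (-Real.sin θ))) θ := by
    intro θ
    have h1 : HasDerivAt (fun θ : ℝ => θ^(n+1)/(n+2)) ((↑(n+1) * θ^n)/(n+2)) θ := by
      simpa using (hasDerivAt_pow (n+1) θ).div_const ((n:ℝ)+2)
    have h2 : HasDerivAt (fun θ : ℝ => Real.sin θ^(n+1) * Real.cos θ/(n+2))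
        (((↑(n+1) * Real.sin θ^n * Real.cos θ) * Real.cos θ + Real.sin θ^(n+1) * (-Real.sin θ))/(n+2)) θ := by
      have := (((Real.hasDerivAt_sin θ).pow (n+1)).mul (Real.hasDerivAt_cos θ)).div_const ((n:ℝ)+2)
      simpa using this
    have h3 : HasDerivAt (fun u : ℝ => ∫ t in u..(1:ℝ), h t) (-h (Real.cos θ)) (Real.cos θ) :=
      integral_hasDerivAt_left (hcont.intervalIntegrable _ _)
        (hcont.stronglyMeasurableAtFilter _ _) hcont.continuousAt
    have h4 := h3.comp θ (Real.hasDerivAt_cos θ)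
    exact (h1.sub h2).sub h4
  have hmono : MonotoneOn F (Icc 0 Δ) := by
    refine monotoneOn_of_deriv_nonneg (convex_Icc 0 Δ)
      (fun θ _ => ((hderiv θ).differentiableAt.continuousAt.continuousWithinAt)) 
      (fun θ _ => (hderiv θ).differentiableAt.differentiableWithinAt) ?_
    intro θ hθ
    rw [interior_Icc] at hθ
    rw [(hderiv θ).deriv]
    have h0θ : 0 ≤ θ := hθ.1.le
    have hθπ : θ ≤ π/2 := le_trans hθ.2.le hΔ'
    have hsin0 : 0 ≤ Real.sin θ := Real.sin_nonneg_of_nonneg_of_le_pi h0θ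
      (by linarith [Real.pi_pos])
    have hsinθ : Real.sin θ ≤ θ := Real.sin_le h0θ
    have hcos : h (Real.cos θ) = Real.sin θ ^ (n+1) := by
      rw [hh]
      simp only []
      rw [show 1 - Real.cos θ^2 = Real.sin θ^2 from by rw [Real.sin_sq]]
      rw [Real.sqrt_sq hsin0]
    rw [hcos]
    have hid : Real.cos θ^2 + Real.sin θ^2 = 1 := by
      rw [add_comm]; exact Real.sin_sq_add_cos_sq θ
    have key : ((↑(n+1) * θ^n)/((n:ℝ)+2)
        - ((↑(n+1) * Real.sin θ^n * Real.cos θ) * Real.cos θ + Real.sin θ^(n+1) * (-Real.sin θ))/(n+2)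
        - (-(Real.sin θ^(n+1)) * (-Real.sin θ)))
        = (↑(n+1)) * (θ^n - Real.sin θ^n) / ((n:ℝ)+2) := by
      field_simp
      push_cast
      linear_combination (-((n:ℝ)+1) * Real.sin θ^n) * hid
    rw [key]
    have hp : Real.sin θ^n ≤ θ^n := pow_le_pow_left₀ hsin0 hsinθ n
    apply div_nonneg _ (by positivity)
    apply mul_nonneg (by positivity)
    linarith
  have h0 : F 0 ≤ F Δ := hmono (left_mem_Icc.2 hΔ) (right_mem_Icc.2 hΔ) hΔ
  have hF0 : F 0 = 0 := by
    simp [hF, intervalIntegral.integral_same]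
  rw [hF0] at h0
  simp only [hF] at h0
  linarith

lemma integral_m_le (n : ℕ) {Δ : ℝ} (h1 : 0 < Δ) (h2 : Δ < π/2)
    (key : Real.sin Δ ^ (n+1) * Real.cos Δ / (n+2)
      + (∫ t in Real.cos Δ..1, Real.sqrt (1-t^2) ^ (n+1)) ≤ Δ^(n+1)/(n+2)) :
    ∫ t in (0:ℝ)..1, (min (Real.sqrt (1-t^2)) (|t| * Real.tan Δ))^(n+1) ≤ Δ^(n+1)/(n+2) := by
  have hc : 0 < Real.cos Δ := Real.cos_pos_of_mem_Ioo ⟨by linarith [Real.pi_pos], h2⟩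
  have hs : 0 < Real.sin Δ := Real.sin_pos_of_pos_of_lt_pi h1 (by linarith [Real.pi_pos])
  have htan : Real.tan Δ = Real.sin Δ / Real.cos Δ := Real.tan_eq_sin_div_cos Δ
  have ht : 0 < Real.tan Δ := by rw [htan]; positivity
  have hc1 : Real.cos Δ ≤ 1 := Real.cos_le_one Δ
  have hsc : Real.sin Δ ^ 2 = 1 - Real.cos Δ ^ 2 := Real.sin_sq Δ
  have hcont : Continuous fun t : ℝ => (min (Real.sqrt (1-t^2)) (|t| * Real.tan Δ))^(n+1) := by
    fun_prop
  have hsplit : (∫ t in (0:ℝ)..1, (min (Real.sqrt (1-t^2)) (|t| * Real.tan Δ))^(n+1))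
      = (∫ t in (0:ℝ)..Real.cos Δ, (min (Real.sqrt (1-t^2)) (|t| * Real.tan Δ))^(n+1))
      + ∫ t in Real.cos Δ..1, (min (Real.sqrt (1-t^2)) (|t| * Real.tan Δ))^(n+1) :=
    (integral_add_adjacent_intervals (hcont.intervalIntegrable _ _)
      (hcont.intervalIntegrable _ _)).symm
  have e1 : (∫ t in (0:ℝ)..Real.cos Δ, (min (Real.sqrt (1-t^2)) (|t| * Real.tan Δ))^(n+1))
      = ∫ t in (0:ℝ)..Real.cos Δ, t^(n+1) * Real.tan Δ^(n+1) := by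
    apply intervalIntegral.integral_congr
    intro t htmem
    rw [uIcc_of_le (by linarith)] at htmem
    obtain ⟨ht0, htc⟩ := htmem
    have habs : |t| = t := abs_of_nonneg ht0
    have hle : t * Real.tan Δ ≤ Real.sqrt (1-t^2) := by
      apply Real.le_sqrt_of_sq_le
      have e : (t * Real.tan Δ)^2 = t^2 * (Real.sin Δ^2 / Real.cos Δ^2) := by
        rw [htan]; ring
      rw [e]
      have h3 : t^2 * (Real.sin Δ^2 / Real.cos Δ^2) ≤ Real.cos Δ^2 * (Real.sin Δ^2 / Real.cos Δ^2) := by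
        apply mul_le_mul_of_nonneg_right _ (by positivity)
        nlinarith
      have h4 : Real.cos Δ^2 * (Real.sin Δ^2 / Real.cos Δ^2) = Real.sin Δ^2 := by
        field_simp
      nlinarith
    show (min (Real.sqrt (1-t^2)) (|t| * Real.tan Δ))^(n+1) = _
    rw [habs, min_eq_right hle, mul_pow]
  have e2 : (∫ t in Real.cos Δ..1, (min (Real.sqrt (1-t^2)) (|t| * Real.tan Δ))^(n+1))
      = ∫ t in Real.cos Δ..1, Real.sqrt (1-t^2)^(n+1) := by
    apply intervalIntegral.integral_congr
    intro t htmem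
    rw [uIcc_of_le (by linarith)] at htmem
    obtain ⟨htc, ht1⟩ := htmem
    have ht0 : 0 < t := lt_of_lt_of_le hc htc
    have habs : |t| = t := abs_of_nonneg ht0.le
    have hle : Real.sqrt (1-t^2) ≤ t * Real.tan Δ := by
      have h5 : (1:ℝ) - t^2 ≤ (t * Real.tan Δ)^2 := by
        have e : (t * Real.tan Δ)^2 = t^2 * (Real.sin Δ^2 / Real.cos Δ^2) := by
          rw [htan]; ring
        have h6 : Real.cos Δ^2 * (Real.sin Δ^2 / Real.cos Δ^2) = Real.sin Δ^2 := by
          field_simp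
        have h3 : Real.cos Δ^2 * (Real.sin Δ^2 / Real.cos Δ^2)
            ≤ t^2 * (Real.sin Δ^2 / Real.cos Δ^2) := by
          apply mul_le_mul_of_nonneg_right _ (by positivity)
          nlinarith
        rw [e]; nlinarith
      calc Real.sqrt (1-t^2) ≤ Real.sqrt ((t * Real.tan Δ)^2) := Real.sqrt_le_sqrt h5
        _ = t * Real.tan Δ := Real.sqrt_sq (by positivity)
    show (min (Real.sqrt (1-t^2)) (|t| * Real.tan Δ))^(n+1) = _
    rw [habs, min_eq_left hle]
  have e3 : (∫ t in (0:ℝ)..Real.cos Δ, t^(n+1) * Real.tan Δ^(n+1))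
      = Real.sin Δ ^ (n+1) * Real.cos Δ / (n+2) := by
    rw [intervalIntegral.integral_mul_const, integral_pow]
    have e4 : Real.cos Δ^(n+1+1) * Real.tan Δ^(n+1) = Real.sin Δ^(n+1) * Real.cos Δ := by
      rw [htan, div_pow, pow_succ (Real.cos Δ) (n+1)]
      field_simp
    rw [zero_pow (by omega), sub_zero, div_mul_eq_mul_div, e4]
    push_cast
    ring
  rw [hsplit, e1, e2, e3]
  exact key

lemma cone_volume_le (n : ℕ) {Δ : ℝ} (h1 : 0 < Δ) (h2 : Δ < π/2)
    (hkey : ∫ t in (0:ℝ)..1, (min (Real.sqrt (1-t^2)) (|t| * Real.tan Δ))^(n+1) ≤ Δ^(n+1)/(n+2)) :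
    volume {x : EuclideanSpace ℝ (Fin (n+2)) | ‖x‖ < 1 ∧ ‖x‖ * Real.cos Δ < |x 0|}
      ≤ ENNReal.ofReal (2 * (Δ^(n+1)/(n+2))
          * (Real.sqrt π ^ (n+1) / Real.Gamma (((n:ℝ)+1)/2 + 1))) := by
  have hc : 0 < Real.cos Δ := Real.cos_pos_of_mem_Ioo ⟨by linarith [Real.pi_pos], h2⟩
  have htan : Real.tan Δ = Real.sin Δ / Real.cos Δ := Real.tan_eq_sin_div_cos Δ
  have hs : 0 < Real.sin Δ := Real.sin_pos_of_pos_of_lt_pi h1 (by linarith [Real.pi_pos])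
  have ht : 0 < Real.tan Δ := by rw [htan]; positivity
  set m : ℝ → ℝ := fun t => min (Real.sqrt (1-t^2)) (|t| * Real.tan Δ) with hm
  have hm0 : ∀ t, 0 ≤ m t := fun t => le_min (Real.sqrt_nonneg _) (by positivity)
  -- the product-space set
  set S : Set (ℝ × (Fin (n+1) → ℝ)) :=
    {p | Real.sqrt (p.1^2 + ∑ j, p.2 j^2) < 1
        ∧ Real.sqrt (p.1^2 + ∑ j, p.2 j^2) * Real.cos Δ < |p.1|} with hS
  have hScont1 : Continuous fun p : ℝ × (Fin (n+1) → ℝ) =>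
      Real.sqrt (p.1^2 + ∑ j, p.2 j^2) := by fun_prop
  have hSmeas : MeasurableSet S := by
    apply MeasurableSet.inter
    · exact measurableSet_lt hScont1.measurable measurable_const
    · exact measurableSet_lt (hScont1.mul continuous_const).measurable
        (continuous_abs.comp continuous_fst).measurable
  -- step 1 : transfer to pi space
  have step1 : volume {x : EuclideanSpace ℝ (Fin (n+2)) | ‖x‖ < 1 ∧ ‖x‖ * Real.cos Δ < |x 0|}
      = volume S := by
    have hψ := (volume_preserving_piFinSuccAbove (fun _ : Fin (n+2) => ℝ) 0)
    have hφ := EuclideanSpace.volume_preserving_symm_measurableEquiv_toLp (Fin (n+2))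
    rw [← (hψ.comp hφ).measure_preimage hSmeas.nullMeasurableSet]
    congr 1
    ext x
    have happ1 : ((MeasurableEquiv.piFinSuccAbove (fun _ : Fin (n+2) => ℝ) 0)
        ((MeasurableEquiv.toLp 2 (Fin (n+2) → ℝ)).symm x)).1 = x 0 := rfl
    have happ2 : ∀ j : Fin (n+1), ((MeasurableEquiv.piFinSuccAbove (fun _ : Fin (n+2) => ℝ) 0)
        ((MeasurableEquiv.toLp 2 (Fin (n+2) → ℝ)).symm x)).2 j = x j.succ := fun _ => rfl
    simp only [Set.mem_setOf_eq, Set.mem_preimage, Function.comp_apply, hS, happ1, happ2]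
    have hnorm : ‖x‖ = Real.sqrt (∑ i, x i^2) := by
      rw [EuclideanSpace.norm_eq]
      congr 1
      exact Finset.sum_congr rfl fun i _ => by rw [Real.norm_eq_abs, sq_abs]
    have hsum : (∑ i, x i^2) = (x 0)^2 + ∑ j : Fin (n+1), x j.succ ^2 :=
      Fin.sum_univ_succ _
    constructor
    · rintro ⟨a, b⟩
      constructor
      · rwa [← hsum, ← hnorm]
      · rwa [← hsum, ← hnorm]
    · rintro ⟨a, b⟩
      constructor
      · rwa [hnorm, hsum]
      · rwa [hnorm, hsum]
  rw [step1]
  -- step 2 : slices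
  have step2 : volume S ≤ ∫⁻ t : ℝ, ENNReal.ofReal ((m t)^(n+1)
      * (Real.sqrt π ^ (n+1) / Real.Gamma (((n:ℝ)+1)/2 + 1))) := by
    rw [Measure.volume_eq_prod, Measure.prod_apply hSmeas]
    apply lintegral_mono
    intro t
    -- slice ≤ ball volume
    have hslice : volume (Prod.mk t ⁻¹' S) ≤ ENNReal.ofReal ((m t)^(n+1)
        * (Real.sqrt π ^ (n+1) / Real.Gamma (((n:ℝ)+1)/2 + 1))) := by
      have hφ2 := EuclideanSpace.volume_preserving_symm_measurableEquiv_toLp (Fin (n+1))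
      have hmeas2 : MeasurableSet (Prod.mk t ⁻¹' S) := measurable_prodMk_left hSmeas
      rw [← hφ2.measure_preimage hmeas2.nullMeasurableSet]
      have hsub : (⇑(MeasurableEquiv.toLp 2 (Fin (n+1) → ℝ)).symm ⁻¹' (Prod.mk t ⁻¹' S))
          ⊆ Metric.ball (0 : EuclideanSpace ℝ (Fin (n+1))) (m t) := by
        intro y hy
        simp only [Set.mem_preimage, hS, Set.mem_setOf_eq] at hy
        obtain ⟨hy1, hy2⟩ := hy
        have hyc : ∀ j, (MeasurableEquiv.toLp 2 (Fin (n+1) → ℝ)).symm y j = y j := fun _ => rfl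
        rw [Metric.mem_ball, dist_zero_right]
        have hnormy : ‖y‖ = Real.sqrt (∑ j, (y j)^2) := by
          rw [EuclideanSpace.norm_eq]
          congr 1
          exact Finset.sum_congr rfl fun i _ => by rw [Real.norm_eq_abs, sq_abs]
        set s : ℝ := ∑ j, (y j)^2 with hsdef
        have hs0 : 0 ≤ s := Finset.sum_nonneg fun i _ => sq_nonneg _
        have hsum_eq : (∑ j, ((MeasurableEquiv.toLp 2 (Fin (n+1) → ℝ)).symm y j)^2) = s := rfl
        rw [hsum_eq] at hy1 hy2
        have ht2s : t^2 + s < 1 := by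
          have := (Real.sqrt_lt' one_pos).mp hy1
          linarith [this]
        have htpos : 0 < |t| := by
          rcases lt_or_ge 0 (|t|) with h | h
          · exact h
          · exfalso
            have : |t| = 0 := le_antisymm h (abs_nonneg t)
            rw [this] at hy2
            nlinarith [Real.sqrt_nonneg (t^2+s), hy2, hc]
        have hlt1 : Real.sqrt s < Real.sqrt (1 - t^2) :=
          Real.sqrt_lt_sqrt hs0 (by linarith)
        have hlt2 : Real.sqrt s < |t| * Real.tan Δ := by
          have hsq : Real.sqrt (t^2+s) < |t| / Real.cos Δ := by
            rw [lt_div_iff₀ hc]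
            exact hy2
          have h5 : t^2 + s < (|t| / Real.cos Δ)^2 :=
            (Real.sqrt_lt' (by positivity)).mp hsq
          have h6 : s < (|t| * Real.tan Δ)^2 := by
            have e : (|t| / Real.cos Δ)^2 = t^2 / Real.cos Δ^2 := by
              rw [div_pow, sq_abs]
            have e2 : (|t| * Real.tan Δ)^2 = t^2 * ((1 - Real.cos Δ^2) / Real.cos Δ^2) := by
              rw [mul_pow, sq_abs, htan, div_pow, ← Real.sin_sq Δ]
            have e3 : t^2 * ((1 - Real.cos Δ^2) / Real.cos Δ^2) = t^2 / Real.cos Δ^2 - t^2 := by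
              field_simp
            rw [e2, e3]
            rw [e] at h5
            linarith
          calc Real.sqrt s < Real.sqrt ((|t| * Real.tan Δ)^2) := Real.sqrt_lt_sqrt hs0 h6
            _ = |t| * Real.tan Δ := Real.sqrt_sq (by positivity)
        rw [hnormy]
        exact lt_min hlt1 hlt2
      calc volume (⇑(MeasurableEquiv.toLp 2 (Fin (n+1) → ℝ)).symm ⁻¹' (Prod.mk t ⁻¹' S))
          ≤ volume (Metric.ball (0 : EuclideanSpace ℝ (Fin (n+1))) (m t)) :=
            measure_mono hsub
        _ = ENNReal.ofReal ((m t)^(n+1)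
            * (Real.sqrt π ^ (n+1) / Real.Gamma (((n:ℝ)+1)/2 + 1))) := by
            rw [EuclideanSpace.volume_ball]
            simp only [Fintype.card_fin]
            rw [← ENNReal.ofReal_pow (hm0 t), ← ENNReal.ofReal_mul (by positivity)]
            norm_num
    exact hslice
  refine le_trans step2 ?_
  -- step 3 : compute the integral
  set c : ℝ := Real.sqrt π ^ (n+1) / Real.Gamma (((n:ℝ)+1)/2 + 1) with hcdef
  have hΓpos : 0 < Real.Gamma (((n:ℝ)+1)/2 + 1) := Real.Gamma_pos_of_pos (by positivity)
  have hc0 : 0 ≤ c := div_nonneg (pow_nonneg (Real.sqrt_nonneg _) _) hΓpos.le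
  set g : ℝ → ℝ := fun t => (m t)^(n+1) * c with hg
  have hgcont : Continuous g := by
    apply Continuous.mul _ continuous_const
    exact (Continuous.min (by fun_prop) (by fun_prop)).pow _
  have hg0 : ∀ t, 0 ≤ g t := fun t => mul_nonneg (pow_nonneg (hm0 t) _) hc0
  have hgsupp : ∀ t, t ∉ Icc (-1:ℝ) 1 → g t = 0 := by
    intro t htmem
    have h1t : 1 < |t| := by
      rcases not_and_or.mp htmem with h | h
      · rw [abs_of_neg (by linarith [not_le.mp h])]; linarith [not_le.mp h]
      · rw [abs_of_pos (by linarith [not_le.mp h])]; linarith [not_le.mp h]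
    have : Real.sqrt (1 - t^2) = 0 := by
      apply Real.sqrt_eq_zero_of_nonpos
      nlinarith [h1t, abs_nonneg t, sq_abs t]
    have hmz : m t = 0 := by
      show min (Real.sqrt (1-t^2)) (|t| * Real.tan Δ) = 0
      rw [this]
      exact min_eq_left (by positivity)
    show (m t)^(n+1) * c = 0
    rw [hmz, zero_pow (by omega), zero_mul]
  have hint : Integrable g := by
    apply hgcont.integrable_of_hasCompactSupport
    apply HasCompactSupport.intro isCompact_Icc hgsupp
  have hlin : (∫⁻ t : ℝ, ENNReal.ofReal (g t)) = ENNReal.ofReal (∫ t : ℝ, g t) :=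
    (MeasureTheory.ofReal_integral_eq_lintegral_ofReal hint
      (Filter.Eventually.of_forall hg0)).symm
  rw [hlin]
  apply ENNReal.ofReal_le_ofReal
  -- compute ∫ g
  have e1 : (∫ t : ℝ, g t) = ∫ t in Icc (-1:ℝ) 1, g t :=
    (setIntegral_eq_integral_of_forall_compl_eq_zero hgsupp).symm
  have e2 : (∫ t in Icc (-1:ℝ) 1, g t) = ∫ t in (-1:ℝ)..1, g t := by
    rw [intervalIntegral.integral_of_le (by norm_num), integral_Icc_eq_integral_Ioc]
  have e3 : (∫ t in (-1:ℝ)..1, g t) = 2 * ∫ t in (0:ℝ)..1, g t := by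
    have hsym : (∫ t in (-1:ℝ)..0, g t) = ∫ t in (0:ℝ)..1, g t := by
      have : (∫ t in (0:ℝ)..1, g (-t)) = ∫ t in (-1:ℝ)..0, g t := by
        simpa using intervalIntegral.integral_comp_neg (a := (0:ℝ)) (b := 1) g
      rw [← this]
      apply intervalIntegral.integral_congr
      intro t _
      show (m (-t))^(n+1) * c = (m t)^(n+1) * c
      have : m (-t) = m t := by
        show min (Real.sqrt (1-(-t)^2)) (|(-t)| * Real.tan Δ)
          = min (Real.sqrt (1-t^2)) (|t| * Real.tan Δ)
        rw [neg_sq, abs_neg]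
      rw [this]
    rw [← intervalIntegral.integral_add_adjacent_intervals
      (hgcont.intervalIntegrable (-1) 0) (hgcont.intervalIntegrable 0 1), hsym]
    ring
  rw [e1, e2, e3]
  have e4 : (∫ t in (0:ℝ)..1, g t) = (∫ t in (0:ℝ)..1, (m t)^(n+1)) * c :=
    intervalIntegral.integral_mul_const _ _
  rw [e4]
  calc 2 * ((∫ t in (0:ℝ)..1, (m t)^(n+1)) * c) ≤ 2 * ((Δ^(n+1)/(n+2)) * c) := by
        apply mul_le_mul_of_nonneg_left _ (by norm_num)
        exact mul_le_mul_of_nonneg_right hkey hc0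
    _ = 2 * (Δ^(n+1)/(n+2)) * c := by ring




lemma const_eq (n : ℕ) (Δ : ℝ) :
    ((n:ℝ)+2) * (2 * (Δ^(n+1)/((n:ℝ)+2)) * (Real.sqrt π ^ (n+1) / Real.Gamma (((n:ℝ)+1)/2 + 1)))
      = 2 * Δ^(n+1) / ((n:ℝ)+1) * sphereArea n := by
  have hΓpos : 0 < Real.Gamma (((n:ℝ)+1)/2) := Real.Gamma_pos_of_pos (by positivity)
  have hΓ : Real.Gamma (((n:ℝ)+1)/2 + 1) = (((n:ℝ)+1)/2) * Real.Gamma (((n:ℝ)+1)/2) := by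
    rw [Real.Gamma_add_one (by positivity)]
  have hsq : Real.sqrt π ^ (n+1) = Real.pi ^ (((n:ℝ)+1)/2) := by
    rw [Real.sqrt_eq_rpow, ← Real.rpow_natCast (π ^ ((1:ℝ)/2)) (n+1),
      ← Real.rpow_mul Real.pi_pos.le]
    congr 1
    push_cast
    ring
  rw [sphereArea, hΓ, hsq]
  have h1 : ((n:ℝ)+1) ≠ 0 := by positivity
  have h2 : ((n:ℝ)+2) ≠ 0 := by positivity
  field_simp

lemma main_lt (n : ℕ) (u : EuclideanSpace ℝ (Fin (n+2))) (hu : ‖u‖ = 1)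
    (Δ : ℝ) (hΔ : 0 < Δ) (hΔ' : Δ < Real.pi / 2) :
    (volume : Measure (EuclideanSpace ℝ (Fin (n+2)))).toSphere
        {v : Metric.sphere (0 : EuclideanSpace ℝ (Fin (n+2))) 1 |
          Real.cos Δ < |(inner ℝ u (v : EuclideanSpace ℝ (Fin (n+2))) : ℝ)|} ≤
      ENNReal.ofReal (2 * Δ ^ (n+1) / ((n:ℝ)+1) * sphereArea n) := by
  set s : Set (Metric.sphere (0:EuclideanSpace ℝ (Fin (n+2))) 1) :=
    {v | Real.cos Δ < |(inner ℝ u (v : EuclideanSpace ℝ (Fin (n+2))) : ℝ)|} with hs_def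
  have hcont : Continuous fun v : Metric.sphere (0:EuclideanSpace ℝ (Fin (n+2))) 1 =>
      |(inner ℝ u (v:EuclideanSpace ℝ (Fin (n+2))) : ℝ)| :=
    (Continuous.inner continuous_const continuous_subtype_val).abs
  have hs_meas : MeasurableSet s := measurableSet_lt measurable_const hcont.measurable
  rw [Measure.toSphere_apply' _ hs_meas]
  -- identify the smul set
  set A : Set (EuclideanSpace ℝ (Fin (n+2))) :=
    {x | ‖x‖ < 1 ∧ ‖x‖ * Real.cos Δ < |(inner ℝ u x : ℝ)|} with hA_def
  have hsmul : (Set.Ioo (0:ℝ) 1 • (Subtype.val '' s) : Set (EuclideanSpace ℝ (Fin (n+2)))) = A := by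
    ext x
    constructor
    · rintro ⟨r, hr, y, ⟨v, hv, rfl⟩, rfl⟩
      obtain ⟨hr0, hr1⟩ := hr
      have hvnorm : ‖(v:EuclideanSpace ℝ (Fin (n+2)))‖ = 1 := norm_eq_of_mem_sphere v
      constructor
      · rw [norm_smul, hvnorm, Real.norm_eq_abs, abs_of_pos hr0, mul_one]
        exact hr1
      · rw [norm_smul, hvnorm, Real.norm_eq_abs, abs_of_pos hr0, mul_one,
          real_inner_smul_right, abs_mul, abs_of_pos hr0]
        exact (mul_lt_mul_iff_right₀ hr0).mpr hv
    · rintro ⟨hx1, hx2⟩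
      have hx0 : x ≠ 0 := by
        rintro rfl
        simp at hx2
      have hxn : 0 < ‖x‖ := norm_pos_iff.mpr hx0
      refine ⟨‖x‖, ⟨hxn, hx1⟩, ‖x‖⁻¹ • x, ⟨⟨‖x‖⁻¹ • x, ?_⟩, ?_, rfl⟩, ?_⟩
      · simp [mem_sphere_iff_norm, norm_smul, abs_of_pos (inv_pos.mpr hxn),
          inv_mul_cancel₀ hxn.ne']
      · show Real.cos Δ < |(inner ℝ u (‖x‖⁻¹ • x) : ℝ)|
        rw [real_inner_smul_right, abs_mul, abs_of_pos (inv_pos.mpr hxn)]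
        rw [show Real.cos Δ = ‖x‖⁻¹ * (‖x‖ * Real.cos Δ) by field_simp]
        exact (mul_lt_mul_iff_right₀ (inv_pos.mpr hxn)).mpr hx2
      · exact smul_inv_smul₀ hxn.ne' x
  rw [hsmul]
  -- orthonormal basis sending 0 to u
  have horth : Orthonormal ℝ (Set.restrict ({0} : Set (Fin (n+2))) (fun _ => u)) := by
    constructor
    · intro i
      exact hu
    · intro i j hij
      exfalso
      exact hij (Subtype.ext (by
        have h1 : (i : Fin (n+2)) = 0 := i.2
        have h2 : (j : Fin (n+2)) = 0 := j.2
        rw [h1, h2]))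
  obtain ⟨b, hb⟩ := horth.exists_orthonormalBasis_extension_of_card_eq (by simp)
  have hb0 : b 0 = u := hb 0 rfl
  set A'' : Set (EuclideanSpace ℝ (Fin (n+2))) :=
    {x : EuclideanSpace ℝ (Fin (n+2)) | ‖x‖ < 1 ∧ ‖x‖ * Real.cos Δ < |x 0|} with hA''_def
  have hA''_meas : MeasurableSet A'' := by
    have hc0 : Continuous fun x : EuclideanSpace ℝ (Fin (n+2)) => |x 0| :=
      ((EuclideanSpace.proj (0 : Fin (n+2))).continuous).abs
    have h1 : MeasurableSet {x : EuclideanSpace ℝ (Fin (n+2)) | ‖x‖ < 1} :=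
      measurableSet_lt continuous_norm.measurable measurable_const
    have h2 : MeasurableSet {x : EuclideanSpace ℝ (Fin (n+2)) | ‖x‖ * Real.cos Δ < |x 0|} :=
      measurableSet_lt (continuous_norm.mul continuous_const).measurable hc0.measurable
    rw [hA''_def, Set.setOf_and]
    exact h1.inter h2
  have hpre : A = ⇑b.repr ⁻¹' A'' := by
    ext x
    have h1 : ‖b.repr x‖ = ‖x‖ := b.repr.norm_map x
    have h2 : b.repr x 0 = (inner ℝ u x : ℝ) := by
      rw [b.repr_apply_apply, hb0]
    simp only [hA_def, hA''_def, Set.mem_setOf_eq, Set.mem_preimage, h1, h2]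
  have hvol : volume A = volume A'' := by
    rw [hpre]
    exact b.measurePreserving_repr.measure_preimage hA''_meas.nullMeasurableSet
  rw [hvol]
  have hdim : (Module.finrank ℝ (EuclideanSpace ℝ (Fin (n+2))) : ℝ≥0∞) = ((n+2 : ℕ) : ℝ≥0∞) := by
    norm_cast
    simp [finrank_euclideanSpace_fin]
  rw [hdim]
  calc ((n+2:ℕ) : ℝ≥0∞) * volume A''
      ≤ ((n+2:ℕ) : ℝ≥0∞) * ENNReal.ofReal (2 * (Δ^(n+1)/(n+2))
          * (Real.sqrt π ^ (n+1) / Real.Gamma (((n:ℝ)+1)/2 + 1))) := by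
        apply mul_le_mul_right
        exact cone_volume_le n hΔ hΔ' (integral_m_le n hΔ hΔ' (key_ineq n hΔ.le hΔ'.le))
    _ = ENNReal.ofReal (2 * Δ ^ (n+1) / ((n:ℝ)+1) * sphereArea n) := by
        rw [← ENNReal.ofReal_natCast (n+2), ← ENNReal.ofReal_mul (by positivity)]
        congr 1
        rw [← const_eq n Δ]
        push_cast
        ring

lemma sphereArea_nat_nonneg (n : ℕ) : 0 ≤ sphereArea n := by
  rw [sphereArea]
  have h : 0 < Real.Gamma (((n:ℝ) + 1) / 2) := Real.Gamma_pos_of_pos (by positivity)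
  positivity

/-- For a unit vector `u ∈ ℝ^k` and `0 < Δ ≤ π/2`, the surface area of
`N(u, Δ) = { v ∈ S^(k-1) : |u·v| > cos Δ }` is at most `(2 Δ^(k-1)/(k-1)) · area(S^(k-2))`. -/
theorem area_cap_le (k : ℕ) (hk : 2 ≤ k) (u : EuclideanSpace ℝ (Fin k)) (hu : ‖u‖ = 1)
    (Δ : ℝ) (hΔ : 0 < Δ) (hΔ' : Δ ≤ Real.pi / 2) :
    (volume : Measure (EuclideanSpace ℝ (Fin k))).toSphere
        {v : Metric.sphere (0 : EuclideanSpace ℝ (Fin k)) 1 |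
          Real.cos Δ < |(inner ℝ u (v : EuclideanSpace ℝ (Fin k)) : ℝ)|} ≤
      ENNReal.ofReal (2 * Δ ^ (k - 1) / ((k : ℝ) - 1) * sphereArea ((k : ℝ) - 2)) := by
  obtain ⟨n, rfl⟩ : ∃ n, k = n + 2 := ⟨k - 2, by omega⟩
  have e0 : n + 2 - 1 = n + 1 := rfl
  have e1 : ((n+2:ℕ):ℝ) - 1 = (n:ℝ) + 1 := by push_cast; ring
  have e2 : ((n+2:ℕ):ℝ) - 2 = (n:ℝ) := by push_cast; ring
  rw [e0, e1, e2]
  -- approximating angles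
  set δ : ℕ → ℝ := fun j => Δ - Δ/(j+2) with hδ_def
  have hδpos : ∀ j : ℕ, 0 < δ j := by
    intro j
    have h2 : (1:ℝ) < (j:ℝ)+2 := by
      have := Nat.cast_nonneg (α := ℝ) j
      linarith
    have := div_lt_self hΔ h2
    simp only [hδ_def]
    linarith
  have hδltΔ : ∀ j : ℕ, δ j < Δ := by
    intro j
    have h2 : (0:ℝ) < (j:ℝ)+2 := by positivity
    have : 0 < Δ/((j:ℝ)+2) := by positivity
    simp only [hδ_def]
    linarith
  have hδlt : ∀ j : ℕ, δ j < π/2 := fun j => lt_of_lt_of_le (hδltΔ j) hΔ'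
  have hδmono : Monotone δ := by
    intro i j hij
    simp only [hδ_def]
    have : Δ/((j:ℝ)+2) ≤ Δ/((i:ℝ)+2) := by
      gcongr
    linarith
  -- the approximating sets
  set F : ℕ → Set (Metric.sphere (0 : EuclideanSpace ℝ (Fin (n+2))) 1) :=
    fun j => {v | Real.cos (δ j) < |(inner ℝ u (v : EuclideanSpace ℝ (Fin (n+2))) : ℝ)|}
    with hF_def
  have hFmono : Monotone F := by
    intro i j hij v hv
    simp only [hF_def, Set.mem_setOf_eq] at hv ⊢
    have hcos : Real.cos (δ j) ≤ Real.cos (δ i) :=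
      Real.cos_le_cos_of_nonneg_of_le_pi (hδpos i).le
        (le_trans (hδlt j).le (by linarith [Real.pi_pos])) (hδmono hij)
    linarith
  have hUnion : (⋃ j, F j)
      = {v : Metric.sphere (0 : EuclideanSpace ℝ (Fin (n+2))) 1 |
          Real.cos Δ < |(inner ℝ u (v : EuclideanSpace ℝ (Fin (n+2))) : ℝ)|} := by
    ext v
    simp only [Set.mem_iUnion, hF_def, Set.mem_setOf_eq]
    constructor
    · rintro ⟨j, hj⟩
      have hcos : Real.cos Δ ≤ Real.cos (δ j) :=
        Real.cos_le_cos_of_nonneg_of_le_pi (hδpos j).le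
          (le_trans hΔ' (by linarith [Real.pi_pos])) (hδltΔ j).le
      linarith
    · intro hv
      have hT0 : Filter.Tendsto (fun j : ℕ => Δ/((j:ℝ)+2)) Filter.atTop (nhds 0) := by
        apply Filter.Tendsto.div_atTop tendsto_const_nhds
        exact Filter.tendsto_atTop_add_const_right _ 2 tendsto_natCast_atTop_atTop
      have hT : Filter.Tendsto (fun j : ℕ => Real.cos (δ j)) Filter.atTop
          (nhds (Real.cos Δ)) := by
        have hT1 : Filter.Tendsto δ Filter.atTop (nhds Δ) := by
          have h4 := (tendsto_const_nhds :
            Filter.Tendsto (fun _ : ℕ => Δ) Filter.atTop (nhds Δ)).sub hT0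
          simpa using h4
        exact (Real.continuous_cos.continuousAt.tendsto).comp hT1
      have hev : ∀ᶠ j in Filter.atTop, Real.cos (δ j)
          < |(inner ℝ u (v : EuclideanSpace ℝ (Fin (n+2))) : ℝ)| :=
        hT.eventually_lt_const hv
      obtain ⟨j, hj⟩ := hev.exists
      exact ⟨j, hj⟩
  rw [← hUnion, hFmono.measure_iUnion]
  apply iSup_le
  intro j
  refine le_trans (main_lt n u hu (δ j) (hδpos j) (hδlt j)) ?_
  apply ENNReal.ofReal_le_ofReal
  have hδj0 : 0 ≤ δ j := (hδpos j).le
  gcongr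
  · exact sphereArea_nat_nonneg n
  · exact (hδltΔ j).le
end

section
/- Let k ≥ 2, u ∈ R^k, and let v_1, v_2 ∈ R^k be unit vectors with 0 ≤ v_1 · v_2 ≤ cos θ for some θ ∈ (0, π/2]. Then ||P_{v_1^⊥}(u)||_2^2 + ||P_{v_2^⊥}(u)||_2^2 ≥ (1 − cos θ) ||u||_2^2, where P_{v^⊥}(u) = u − (u·v)v. -/
open Real

/-- Orthogonal projection of `u` onto the hyperplane orthogonal to the unit vector `v`:
`P_{v^⊥}(u) = u − (u·v) v`. -/
noncomputable def projPerp {E : Type*} [NormedAddCommGroup E] [InnerProductSpace ℝ E]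
    (v u : E) : E := u - (inner ℝ u v : ℝ) • v

lemma projPerp_norm_sq {E : Type*} [NormedAddCommGroup E] [InnerProductSpace ℝ E]
    (v u : E) (hv : ‖v‖ = 1) :
    ‖projPerp v u‖ ^ 2 = ‖u‖ ^ 2 - (inner ℝ u v : ℝ) ^ 2 := by
  unfold projPerp
  rw [norm_sub_sq_real, real_inner_smul_right, norm_smul, hv]
  simp [Real.norm_eq_abs, sq_abs]
  ring

lemma inner_sq_add_inner_sq_le {E : Type*} [NormedAddCommGroup E] [InnerProductSpace ℝ E]
    (u v₁ v₂ : E) (hv₁ : ‖v₁‖ = 1) (hv₂ : ‖v₂‖ = 1) (h0 : 0 ≤ (inner ℝ v₁ v₂ : ℝ)) :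
    (inner ℝ u v₁ : ℝ) ^ 2 + (inner ℝ u v₂ : ℝ) ^ 2
      ≤ (1 + (inner ℝ v₁ v₂ : ℝ)) * ‖u‖ ^ 2 := by
  set a : ℝ := inner ℝ u v₁ with ha
  set b : ℝ := inner ℝ u v₂ with hb
  set c : ℝ := inner ℝ v₁ v₂ with hc
  set w : E := a • v₁ + b • v₂ with hw
  have hCS : (inner ℝ u w : ℝ) ≤ ‖u‖ * ‖w‖ := real_inner_le_norm u w
  have hiw : (inner ℝ u w : ℝ) = a ^ 2 + b ^ 2 := by
    simp [hw, inner_add_right, real_inner_smul_right, ← ha, ← hb]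
    ring
  have hwsq : ‖w‖ ^ 2 = a ^ 2 + b ^ 2 + 2 * a * b * c := by
    rw [hw, norm_add_sq_real, norm_smul, norm_smul, real_inner_smul_left,
      real_inner_smul_right, hv₁, hv₂, ← hc]
    simp [Real.norm_eq_abs, mul_pow, sq_abs]
    ring
  have h2ab : 2 * a * b ≤ a ^ 2 + b ^ 2 := by nlinarith [sq_nonneg (a - b)]
  have hwle : ‖w‖ ^ 2 ≤ (1 + c) * (a ^ 2 + b ^ 2) := by nlinarith
  have hsq : (a ^ 2 + b ^ 2) ^ 2 ≤ (‖u‖ * ‖w‖) ^ 2 := by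
    have h := hCS
    rw [hiw] at h
    have hnn : (0:ℝ) ≤ a ^ 2 + b ^ 2 := by positivity
    nlinarith
  rcases eq_or_lt_of_le (by positivity : (0:ℝ) ≤ a ^ 2 + b ^ 2) with h | h
  · nlinarith [sq_nonneg ‖u‖]
  · have : (a ^ 2 + b ^ 2) ^ 2 ≤ (1 + c) * ‖u‖ ^ 2 * (a ^ 2 + b ^ 2) := by
      calc (a ^ 2 + b ^ 2) ^ 2 ≤ (‖u‖ * ‖w‖) ^ 2 := hsq
        _ = ‖u‖ ^ 2 * ‖w‖ ^ 2 := by ring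
        _ ≤ ‖u‖ ^ 2 * ((1 + c) * (a ^ 2 + b ^ 2)) := by
            apply mul_le_mul_of_nonneg_left hwle (by positivity)
        _ = (1 + c) * ‖u‖ ^ 2 * (a ^ 2 + b ^ 2) := by ring
    exact le_of_mul_le_mul_right (by nlinarith) h

/-- For `k ≥ 2`, `u ∈ ℝ^k`, and unit vectors `v₁, v₂` with `0 ≤ v₁·v₂ ≤ cos θ`,
`θ ∈ (0, π/2]`, one has `‖P_{v₁^⊥}(u)‖² + ‖P_{v₂^⊥}(u)‖² ≥ (1 − cos θ) ‖u‖²`. -/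
theorem projPerp_sq_add_projPerp_sq_ge (k : ℕ) (hk : 2 ≤ k) (θ : ℝ) (hθ0 : 0 < θ)
    (hθ1 : θ ≤ Real.pi / 2) (u v₁ v₂ : EuclideanSpace ℝ (Fin k))
    (hv₁ : ‖v₁‖ = 1) (hv₂ : ‖v₂‖ = 1)
    (h0 : 0 ≤ (inner ℝ v₁ v₂ : ℝ)) (h1 : (inner ℝ v₁ v₂ : ℝ) ≤ Real.cos θ) :
    (1 - Real.cos θ) * ‖u‖ ^ 2 ≤ ‖projPerp v₁ u‖ ^ 2 + ‖projPerp v₂ u‖ ^ 2 := by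
  have key := inner_sq_add_inner_sq_le u v₁ v₂ hv₁ hv₂ h0
  rw [projPerp_norm_sq v₁ u hv₁, projPerp_norm_sq v₂ u hv₂]
  nlinarith [sq_nonneg ‖u‖]
end
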